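/- For every C ≥ 0, C_g ≥ 0 and T > 0, there exists a constant R > 0, depending only on C, C_g and T (and in particular independent of N and d), with the following property: for any integer N ≥ 1 and any Lipschitz curves r₁, …, r_N : [0,T] → ℝ^d satisfying, for almost every t ∈ [0,T], r_i'(t) = −A_i(t)ᵀ r_i(t) − (1/N) ∑_{j=1}^N B_{ij}(t)ᵀ r_j(t) + c_i(t), where the matrices A_i(t), B_{ij}(t) ∈ ℝ^{d×d} have operator norm at most C, the vectors c_i(t) ∈ ℝ^d satisfy |c_i(t)| ≤ C, and the terminal data satisfy |r_i(T)| ≤ C_g for every i, it holds that |r_i(t)| ≤ R for every i ∈ {1,…,N} and all t ∈ [0,T]. -/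

import Mathlib

open MeasureTheory Set Filter intervalIntegral Topology

set_option linter.unusedSectionVars false

section Aux

variable {E : Type*} [NormedAddCommGroup E] [NormedSpace ℝ E] [CompleteSpace E]

/-- FTC for globally Lipschitz functions with an a.e. derivative. -/
lemma ftc_lip_global {f v : ℝ → E} {a b : ℝ} (hab : a ≤ b) {L : NNReal}
    (hf : LipschitzWith L f)
    (hv : ∀ᵐ s ∂(volume.restrict (Ioo a b)), HasDerivAt f (v s) s) :
    f b - f a = ∫ s in Ioo a b, v s := by
  set h : ℕ → ℝ := fun n => ((n : ℝ) + 1)⁻¹ with hh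
  have hpos : ∀ n, 0 < h n := fun n => by positivity
  have hh0 : Tendsto h atTop (𝓝 0) := by
    simpa [hh, one_div] using tendsto_one_div_add_atTop_nhds_zero_nat (𝕜 := ℝ)
  have hcf : Continuous f := hf.continuous
  have hfi : ∀ u w : ℝ, IntervalIntegrable f volume u w := fun u w =>
    hcf.intervalIntegrable u w
  set F : ℕ → ℝ → E := fun n t => (h n)⁻¹ • (f (t + h n) - f t) with hF
  -- slope convergence at any point c for sequences c + h n
  have htends : ∀ c : ℝ, Tendsto (fun n => c + h n) atTop (𝓝[≠] c) := by
    intro c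
    rw [tendsto_nhdsWithin_iff]
    constructor
    · simpa using tendsto_const_nhds.add hh0
    · exact Eventually.of_forall fun n => by
        simp [mem_compl_iff, (hpos n).ne']
  -- a.e. convergence of the difference quotients
  have hlim : ∀ᵐ t ∂(volume.restrict (Ioo a b)),
      Tendsto (fun n => F n t) atTop (𝓝 (v t)) := by
    filter_upwards [hv] with t hd
    have h1 : Tendsto (slope f t) (𝓝[≠] t) (𝓝 (v t)) :=
      hasDerivAt_iff_tendsto_slope.1 hd
    have h2 := h1.comp (htends t)
    have : (slope f t ∘ fun n => t + h n) = fun n => F n t := by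
      funext n
      simp [slope_def_module, hF, Function.comp]
    rwa [this] at h2
  -- measurability and boundedness
  have hmeasF : ∀ n, AEStronglyMeasurable (F n) (volume.restrict (Ioo a b)) := by
    intro n
    exact (((hcf.comp (continuous_add_right (h n))).sub hcf).const_smul _).aestronglyMeasurable
  have hboundF : ∀ n, ∀ᵐ t ∂(volume.restrict (Ioo a b)), ‖F n t‖ ≤ (L : ℝ) := by
    intro n
    refine Eventually.of_forall fun t => ?_
    have hd : ‖f (t + h n) - f t‖ ≤ (L : ℝ) * (h n) := by
      have := hf.dist_le_mul (t + h n) t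
      rwa [dist_eq_norm, dist_eq_norm, add_sub_cancel_left, Real.norm_of_nonneg (hpos n).le]
        at this
    rw [hF]
    calc ‖(h n)⁻¹ • (f (t + h n) - f t)‖ = (h n)⁻¹ * ‖f (t + h n) - f t‖ := by
          rw [norm_smul, Real.norm_of_nonneg (inv_nonneg.2 (hpos n).le)]
      _ ≤ (h n)⁻¹ * ((L : ℝ) * h n) := by
          exact mul_le_mul_of_nonneg_left hd (inv_nonneg.2 (hpos n).le)
      _ = (L : ℝ) := by rw [mul_comm, mul_assoc, mul_inv_cancel₀ (hpos n).ne', mul_one]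
  have hbound_int : Integrable (fun _ : ℝ => (L : ℝ)) (volume.restrict (Ioo a b)) :=
    integrableOn_const measure_Ioo_lt_top.ne
  -- dominated convergence
  have hDCT : Tendsto (fun n => ∫ t in Ioo a b, F n t) atTop (𝓝 (∫ t in Ioo a b, v t)) :=
    tendsto_integral_of_dominated_convergence _ hmeasF hbound_int hboundF hlim
  -- compute the integrals of the difference quotients
  have hInt : ∀ n, (∫ t in Ioo a b, F n t)
      = (h n)⁻¹ • (∫ s in b..(b + h n), f s) - (h n)⁻¹ • (∫ s in a..(a + h n), f s) := by
    intro n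
    have e0 : (∫ t in Ioo a b, F n t) = ∫ t in a..b, F n t := by
      rw [intervalIntegral.integral_of_le hab, integral_Ioc_eq_integral_Ioo]
    have hint1 : IntervalIntegrable (fun t => f (t + h n)) volume a b :=
      (hcf.comp (continuous_add_right (h n))).intervalIntegrable a b
    have e1 : (∫ t in a..b, F n t)
        = (h n)⁻¹ • ((∫ t in a..b, f (t + h n)) - ∫ t in a..b, f t) := by
      rw [← intervalIntegral.integral_sub hint1 (hfi a b), ← intervalIntegral.integral_smul]
    have e2 : (∫ t in a..b, f (t + h n)) = ∫ t in (a + h n)..(b + h n), f t := by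
      rw [intervalIntegral.integral_comp_add_right]
    have eadd1 := intervalIntegral.integral_add_adjacent_intervals
      (hfi a (a + h n)) (hfi (a + h n) (b + h n))
    have eadd2 := intervalIntegral.integral_add_adjacent_intervals
      (hfi a b) (hfi b (b + h n))
    have e3 : (∫ t in (a + h n)..(b + h n), f t)
        = (∫ t in a..b, f t) + (∫ t in b..(b + h n), f t) - ∫ t in a..(a + h n), f t := by
      rw [eadd2, ← eadd1]; abel
    rw [e0, e1, e2, e3, ← smul_sub]
    congr 1
    abel
  -- endpoint limits
  have hend : ∀ c : ℝ, Tendsto (fun n => (h n)⁻¹ • (∫ s in c..(c + h n), f s))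
      atTop (𝓝 (f c)) := by
    intro c
    have hFc : HasDerivAt (fun u => ∫ x in c..u, f x) (f c) c :=
      intervalIntegral.integral_hasDerivAt_right (hfi c c)
        (hcf.stronglyMeasurableAtFilter _ _) hcf.continuousAt
    have h1 : Tendsto (slope (fun u => ∫ x in c..u, f x) c) (𝓝[≠] c) (𝓝 (f c)) :=
      hasDerivAt_iff_tendsto_slope.1 hFc
    have h2 := h1.comp (htends c)
    have : (slope (fun u => ∫ x in c..u, f x) c ∘ fun n => c + h n)
        = fun n => (h n)⁻¹ • (∫ s in c..(c + h n), f s) := by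
      funext n
      simp [slope_def_module]
    rwa [this] at h2
  have hDQ : Tendsto (fun n => ∫ t in Ioo a b, F n t) atTop (𝓝 (f b - f a)) := by
    have := (hend b).sub (hend a)
    simp_rw [hInt]
    exact this
  exact (tendsto_nhds_unique hDQ hDCT)

/-- FTC for functions Lipschitz on `Icc a b` with an a.e. derivative on `Ioo a b`. -/
lemma ftc_lip {f v : ℝ → E} {a b : ℝ} (hab : a ≤ b) {L : NNReal}
    (hf : LipschitzOnWith L f (Icc a b))
    (hv : ∀ᵐ s ∂(volume.restrict (Ioo a b)), HasDerivAt f (v s) s) :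
    f b - f a = ∫ s in Ioo a b, v s := by
  set π : ℝ → ℝ := fun x => max a (min x b) with hπ
  have hπlip : LipschitzWith 1 π := (LipschitzWith.id.min_const b).const_max a
  have hπmem : ∀ x, π x ∈ Icc a b := fun x =>
    ⟨le_max_left _ _, max_le hab (min_le_right _ _)⟩
  have hπid : ∀ x ∈ Icc a b, π x = x := fun x hx => by
    simp [hπ, min_eq_left hx.2, max_eq_right hx.1]
  set g : ℝ → E := fun x => f (π x) with hg
  have hglip : LipschitzWith L g := by
    intro x y
    calc edist (g x) (g y) ≤ L * edist (π x) (π y) := hf (hπmem x) (hπmem y)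
      _ ≤ L * (1 * edist x y) := by
          exact mul_le_mul_right (hπlip x y) L
      _ = L * edist x y := by rw [one_mul]
  have hgv : ∀ᵐ s ∂(volume.restrict (Ioo a b)), HasDerivAt g (v s) s := by
    filter_upwards [hv, ae_restrict_mem measurableSet_Ioo] with s hd hs
    have heq : f =ᶠ[𝓝 s] g := by
      filter_upwards [Ioo_mem_nhds hs.1 hs.2] with x hx
      show f x = f (π x)
      rw [hπid x (Ioo_subset_Icc_self hx)]
    exact hd.congr_of_eventuallyEq heq.symm
  have h := ftc_lip_global hab hglip hgv
  have hga : g a = f a := by show f (π a) = f a; rw [hπid a ⟨le_rfl, hab⟩]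
  have hgb : g b = f b := by show f (π b) = f b; rw [hπid b ⟨hab, le_rfl⟩]
  rwa [hga, hgb] at h

/-- Integral form of Grönwall's inequality (backward in time). -/
lemma gronwall_int {u : ℝ → ℝ} {T K a b : ℝ} (hT : 0 ≤ T) (hK : 0 < K) (hb : 0 ≤ b)
    (hu : ContinuousOn u (Icc 0 T)) (hupos : ∀ t ∈ Icc (0:ℝ) T, 0 ≤ u t)
    (hineq : ∀ t ∈ Icc (0:ℝ) T, u t ≤ a + ∫ s in t..T, (K * u s + b)) :
    ∀ t ∈ Icc (0:ℝ) T, u t ≤ (a + b / K) * Real.exp (K * T) := by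
  set φ : ℝ → ℝ := fun s => K * u s + b with hφ
  have hφc : ContinuousOn φ (Icc 0 T) := (continuousOn_const.mul hu).add continuousOn_const
  have hφint : IntegrableOn φ (Icc 0 T) := hφc.integrableOn_Icc
  set G : ℝ → ℝ := fun t => ∫ s in t..T, φ s with hG
  have hGc : ContinuousOn G (Icc 0 T) := by
    have h := continuousOn_primitive_interval_left (f := φ) (a := 0) (b := T) (μ := volume)
      (by rwa [uIcc_of_le hT])
    rwa [uIcc_of_le hT] at h
  have hGderiv : ∀ t ∈ Ioo (0:ℝ) T, HasDerivAt G (-(φ t)) t := by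
    intro t ht
    have hct : ContinuousAt φ t := hφc.continuousAt (Icc_mem_nhds ht.1 ht.2)
    have hmeas : StronglyMeasurableAtFilter φ (𝓝 t) :=
      (hφc.mono Ioo_subset_Icc_self).stronglyMeasurableAtFilter isOpen_Ioo t ht
    have hint : IntervalIntegrable φ volume T t := by
      refine IntervalIntegrable.symm ?_
      have : ContinuousOn φ (uIcc t T) := by
        rw [uIcc_of_le ht.2.le]
        exact hφc.mono (Icc_subset_Icc ht.1.le le_rfl)
      exact this.intervalIntegrable
    have h1 : HasDerivAt (fun x => ∫ s in T..x, φ s) (φ t) t :=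
      intervalIntegral.integral_hasDerivAt_right hint hmeas hct
    have hGeq : G = fun x => -(∫ s in T..x, φ s) := by
      funext x
      show (∫ s in x..T, φ s) = -(∫ s in T..x, φ s)
      exact intervalIntegral.integral_symm T x
    rw [hGeq]
    exact h1.neg
  set P : ℝ → ℝ := fun t => Real.exp (K * t) * (a + b / K + G t) with hP
  have hPd : ∀ t ∈ Ioo (0:ℝ) T, HasDerivAt P
      (K * Real.exp (K * t) * (a + b / K + G t) + Real.exp (K * t) * (-(φ t))) t := by
    intro t ht
    have he : HasDerivAt (fun x => Real.exp (K * x)) (K * Real.exp (K * t)) t := by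
      have h1 : HasDerivAt (fun x : ℝ => K * x) K t := by
        simpa using (hasDerivAt_id t).const_mul K
      have := (Real.hasDerivAt_exp (K * t)).comp t h1
      rw [mul_comm]; exact this
    exact he.mul ((hGderiv t ht).const_add (a + b / K))
  have hPc : ContinuousOn P (Icc 0 T) :=
    ((Real.continuous_exp.comp (continuous_const.mul continuous_id)).continuousOn).mul
      (continuousOn_const.add hGc)
  have hPmono : MonotoneOn P (Icc 0 T) := by
    apply monotoneOn_of_deriv_nonneg (convex_Icc 0 T) hPc
    · rw [interior_Icc]
      exact fun x hx => ((hPd x hx).differentiableAt).differentiableWithinAt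
    · rw [interior_Icc]
      intro x hx
      rw [(hPd x hx).deriv]
      have hux : u x ≤ a + G x := hineq x (Ioo_subset_Icc_self hx)
      have hbk : K * (b / K) = b := by field_simp
      have hφx : φ x ≤ K * (a + b / K + G x) := by
        have h1 : K * u x ≤ K * (a + G x) := mul_le_mul_of_nonneg_left hux hK.le
        rw [hφ]
        simp only
        nlinarith
      nlinarith [Real.exp_pos (K * x)]
  intro t ht
  have h1 : P t ≤ P T := hPmono ht (right_mem_Icc.2 hT) ht.2
  have hGT : G T = 0 := intervalIntegral.integral_same
  have hut : u t ≤ a + G t := hineq t ht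
  have hnn : 0 ≤ a + G t := le_trans (hupos t ht) hut
  have he1 : 1 ≤ Real.exp (K * t) := Real.one_le_exp (mul_nonneg hK.le ht.1)
  have hbK : 0 ≤ b / K := div_nonneg hb hK.le
  have hPT : P T = Real.exp (K * T) * (a + b / K) := by
    rw [hP]; simp [hGT]
  calc u t ≤ a + G t := hut
    _ ≤ a + b / K + G t := by linarith
    _ ≤ Real.exp (K * t) * (a + b / K + G t) := le_mul_of_one_le_left (by linarith) he1
    _ = P t := rfl
    _ ≤ P T := h1
    _ = (a + b / K) * Real.exp (K * T) := by rw [hPT, mul_comm]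

end Aux

section
open MeasureTheory Set

/-- Uniform-in-`N` bound on the rescaled costates of the mean-field Pontryagin Maximum
Principle: solutions of the backward adjoint system coupled only through averages, with
uniformly bounded coefficients, source terms and terminal data, are uniformly bounded by a
constant depending only on `C, C_g, T`. -/
theorem stmt_4 (C C_g T : ℝ) (hC : 0 ≤ C) (hCg : 0 ≤ C_g) (hT : 0 < T) :
    ∃ R : ℝ, 0 < R ∧
      ∀ (d N : ℕ), 1 ≤ N →
        ∀ (r : Fin N → ℝ → EuclideanSpace ℝ (Fin d))
          (A : Fin N → ℝ → EuclideanSpace ℝ (Fin d) →L[ℝ] EuclideanSpace ℝ (Fin d))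
          (B : Fin N → Fin N → ℝ → EuclideanSpace ℝ (Fin d) →L[ℝ] EuclideanSpace ℝ (Fin d))
          (c : Fin N → ℝ → EuclideanSpace ℝ (Fin d)),
          (∀ i, ∃ L : NNReal, LipschitzOnWith L (r i) (Icc (0:ℝ) T)) →
          (∀ i, ∀ᵐ t ∂(volume.restrict (Icc (0:ℝ) T)),
            HasDerivAt (r i)
              (-(ContinuousLinearMap.adjoint (A i t)) (r i t)
                - (1 / (N:ℝ)) • ∑ j, (ContinuousLinearMap.adjoint (B i j t)) (r j t)
                + c i t) t
            ∧ ‖A i t‖ ≤ C ∧ (∀ j, ‖B i j t‖ ≤ C) ∧ ‖c i t‖ ≤ C) →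
          (∀ i, ‖r i T‖ ≤ C_g) →
          ∀ i, ∀ t ∈ Icc (0:ℝ) T, ‖r i t‖ ≤ R := by
  set K : ℝ := 2 * C + 1 with hKdef
  have hKpos : 0 < K := by linarith
  set U : ℝ := (C_g + C / K) * Real.exp (K * T) with hUdef
  have hUnn : 0 ≤ U := mul_nonneg (by positivity) (Real.exp_pos _).le
  refine ⟨(C_g + (C * U + C) / K) * Real.exp (K * T) + 1, by positivity, ?_⟩
  intro d N hN r A B c hLip hODE hTerm
  have hNpos : (0:ℝ) < N := by exact_mod_cast hN
  -- the a.e. velocity field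
  set v : Fin N → ℝ → EuclideanSpace ℝ (Fin d) := fun i s =>
    -(ContinuousLinearMap.adjoint (A i s)) (r i s)
      - (1 / (N:ℝ)) • ∑ j, (ContinuousLinearMap.adjoint (B i j s)) (r j s) + c i s with hvdef
  have hrc : ∀ j, ContinuousOn (r j) (Icc 0 T) := fun j => (hLip j).choose_spec.continuousOn
  set u : ℝ → ℝ := fun s => (N:ℝ)⁻¹ * ∑ j, ‖r j s‖ with hudef
  have huc : ContinuousOn u (Icc 0 T) := by
    apply continuousOn_const.mul
    exact continuousOn_finset_sum _ fun j _ => (hrc j).norm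
  have hunn : ∀ s, 0 ≤ u s := fun s =>
    mul_nonneg (by positivity) (Finset.sum_nonneg fun j _ => norm_nonneg _)
  -- a.e. pointwise bound on the velocity
  have hvb : ∀ i, ∀ᵐ s ∂(volume.restrict (Icc (0:ℝ) T)),
      ‖v i s‖ ≤ C * ‖r i s‖ + C * u s + C := by
    intro i
    filter_upwards [hODE i] with s hs
    obtain ⟨-, hA, hB, hc⟩ := hs
    have h1 : ‖(ContinuousLinearMap.adjoint (A i s)) (r i s)‖ ≤ C * ‖r i s‖ := by
      calc ‖(ContinuousLinearMap.adjoint (A i s)) (r i s)‖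
          ≤ ‖ContinuousLinearMap.adjoint (A i s)‖ * ‖r i s‖ :=
            ContinuousLinearMap.le_opNorm _ _
        _ = ‖A i s‖ * ‖r i s‖ := by
            rw [LinearIsometryEquiv.norm_map ContinuousLinearMap.adjoint]
        _ ≤ C * ‖r i s‖ := mul_le_mul_of_nonneg_right hA (norm_nonneg _)
    have h2 : ‖(1 / (N:ℝ)) • ∑ j, (ContinuousLinearMap.adjoint (B i j s)) (r j s)‖
        ≤ C * u s := by
      rw [norm_smul, Real.norm_of_nonneg (by positivity)]
      have hsum : ‖∑ j, (ContinuousLinearMap.adjoint (B i j s)) (r j s)‖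
          ≤ ∑ j, C * ‖r j s‖ := by
        refine le_trans (norm_sum_le _ _) (Finset.sum_le_sum fun j _ => ?_)
        calc ‖(ContinuousLinearMap.adjoint (B i j s)) (r j s)‖
            ≤ ‖ContinuousLinearMap.adjoint (B i j s)‖ * ‖r j s‖ :=
              ContinuousLinearMap.le_opNorm _ _
          _ = ‖B i j s‖ * ‖r j s‖ := by
              rw [LinearIsometryEquiv.norm_map ContinuousLinearMap.adjoint]
          _ ≤ C * ‖r j s‖ := mul_le_mul_of_nonneg_right (hB j) (norm_nonneg _)
      calc (1 / (N:ℝ)) * ‖∑ j, (ContinuousLinearMap.adjoint (B i j s)) (r j s)‖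
          ≤ (1 / (N:ℝ)) * ∑ j, C * ‖r j s‖ :=
            mul_le_mul_of_nonneg_left hsum (by positivity)
        _ = C * u s := by
            rw [hudef]
            simp only [← Finset.mul_sum, one_div]
            ring
    calc ‖v i s‖ ≤ ‖-(ContinuousLinearMap.adjoint (A i s)) (r i s)
          - (1 / (N:ℝ)) • ∑ j, (ContinuousLinearMap.adjoint (B i j s)) (r j s)‖ + ‖c i s‖ :=
          norm_add_le _ _
      _ ≤ ‖-(ContinuousLinearMap.adjoint (A i s)) (r i s)‖
          + ‖(1 / (N:ℝ)) • ∑ j, (ContinuousLinearMap.adjoint (B i j s)) (r j s)‖ + ‖c i s‖ := by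
          exact add_le_add_left (norm_sub_le _ _) _
      _ ≤ C * ‖r i s‖ + C * u s + C := by
          rw [norm_neg]
          exact add_le_add (add_le_add h1 h2) hc
  -- interval integrability of the relevant integrands
  have hbint : ∀ (i : Fin N) (t : ℝ), t ∈ Icc (0:ℝ) T →
      IntervalIntegrable (fun s => C * ‖r i s‖ + C * u s + C) volume t T := by
    intro i t ht
    have : ContinuousOn (fun s => C * ‖r i s‖ + C * u s + C) (uIcc t T) := by
      rw [uIcc_of_le ht.2]
      exact ((continuousOn_const.mul ((hrc i).norm.mono (Icc_subset_Icc ht.1 le_rfl))).add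
        (continuousOn_const.mul (huc.mono (Icc_subset_Icc ht.1 le_rfl)))).add continuousOn_const
    exact this.intervalIntegrable
  -- basic integral inequality for each individual costate
  have hIB : ∀ i, ∀ t ∈ Icc (0:ℝ) T,
      ‖r i t‖ ≤ C_g + ∫ s in t..T, (C * ‖r i s‖ + C * u s + C) := by
    intro i t ht
    obtain ⟨L, hL⟩ := hLip i
    have hsub : Icc t T ⊆ Icc 0 T := Icc_subset_Icc ht.1 le_rfl
    have hsub' : Ioo t T ⊆ Icc 0 T := fun x hx => ⟨ht.1.trans hx.1.le, hx.2.le⟩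
    have hvae : ∀ᵐ s ∂(volume.restrict (Ioo t T)), HasDerivAt (r i) (v i s) s := by
      have := ae_restrict_of_ae_restrict_of_subset hsub' (hODE i)
      filter_upwards [this] with s hs using hs.1
    have hftc := ftc_lip ht.2 (hL.mono hsub) hvae
    have hbd : ∀ᵐ s ∂(volume.restrict (Ioo t T)), ‖v i s‖ ≤ C * ‖r i s‖ + C * u s + C :=
      ae_restrict_of_ae_restrict_of_subset hsub' (hvb i)
    have hbint' : Integrable (fun s => C * ‖r i s‖ + C * u s + C)
        (volume.restrict (Ioo t T)) := by
      have h1 : IntegrableOn (fun s => C * ‖r i s‖ + C * u s + C) (Icc t T) := by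
        apply ContinuousOn.integrableOn_Icc
        have := hbint i t ht
        rw [intervalIntegrable_iff_integrableOn_Icc_of_le ht.2] at this
        exact (((hrc i).norm.mono hsub).const_smul C |>.add
          ((huc.mono hsub).const_smul C)).add continuousOn_const
      exact h1.mono_set Ioo_subset_Icc_self
    have hnormint : ‖∫ s in Ioo t T, v i s‖
        ≤ ∫ s in Ioo t T, (C * ‖r i s‖ + C * u s + C) :=
      norm_integral_le_of_norm_le hbint' hbd
    have heq : (∫ s in Ioo t T, (C * ‖r i s‖ + C * u s + C))
        = ∫ s in t..T, (C * ‖r i s‖ + C * u s + C) := by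
      rw [intervalIntegral.integral_of_le ht.2, integral_Ioc_eq_integral_Ioo]
    have h3 : ‖r i t‖ - ‖r i T‖ ≤ ‖r i T - r i t‖ := by
      rw [norm_sub_rev]
      exact norm_sub_norm_le _ _
    rw [hftc] at h3
    have := hTerm i
    calc ‖r i t‖ ≤ ‖r i T‖ + ‖∫ s in Ioo t T, v i s‖ := by linarith
      _ ≤ C_g + ∫ s in t..T, (C * ‖r i s‖ + C * u s + C) := by
          rw [← heq]
          exact add_le_add (hTerm i) hnormint
  -- averaged integral inequality
  have hS : ∀ s, ∑ j, ‖r j s‖ = (N:ℝ) * u s := by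
    intro s
    rw [hudef]
    field_simp
  have hcont2 : ∀ t ∈ Icc (0:ℝ) T, ∀ a b : ℝ,
      IntervalIntegrable (fun s => a * u s + b) volume t T := by
    intro t ht a b
    have : ContinuousOn (fun s => a * u s + b) (uIcc t T) := by
      rw [uIcc_of_le ht.2]
      exact (continuousOn_const.mul (huc.mono (Icc_subset_Icc ht.1 le_rfl))).add
        continuousOn_const
    exact this.intervalIntegrable
  have hIA : ∀ t ∈ Icc (0:ℝ) T, u t ≤ C_g + ∫ s in t..T, (K * u s + C) := by
    intro t ht
    have hsum : ∑ i, ‖r i t‖ ≤ ∑ i : Fin N, (C_g + ∫ s in t..T, (C * ‖r i s‖ + C * u s + C)) :=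
      Finset.sum_le_sum fun i _ => hIB i t ht
    have hsum2 : ∑ i : Fin N, (C_g + ∫ s in t..T, (C * ‖r i s‖ + C * u s + C))
        = (N:ℝ) * C_g + ∫ s in t..T, ∑ i : Fin N, (C * ‖r i s‖ + C * u s + C) := by
      rw [Finset.sum_add_distrib, Finset.sum_const,
        ← intervalIntegral.integral_finset_sum (fun i _ => hbint i t ht)]
      simp [Finset.card_univ, nsmul_eq_mul]
    have hintg : ∀ s, ∑ i : Fin N, (C * ‖r i s‖ + C * u s + C) = (N:ℝ) * (2 * C * u s + C) := by
      intro s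
      rw [Finset.sum_add_distrib, Finset.sum_add_distrib, ← Finset.mul_sum, hS s,
        Finset.sum_const, Finset.sum_const]
      simp only [Finset.card_univ, Fintype.card_fin, nsmul_eq_mul]
      ring
    have hpull : (∫ s in t..T, ∑ i : Fin N, (C * ‖r i s‖ + C * u s + C))
        = (N:ℝ) * ∫ s in t..T, (2 * C * u s + C) := by
      rw [← intervalIntegral.integral_const_mul]
      congr 1
      funext s
      exact hintg s
    have h5 : (N:ℝ) * u t ≤ (N:ℝ) * (C_g + ∫ s in t..T, (2 * C * u s + C)) := by
      rw [← hS t, mul_add, ← hpull, ← hsum2]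
      exact hsum
    have h6 : u t ≤ C_g + ∫ s in t..T, (2 * C * u s + C) :=
      le_of_mul_le_mul_left h5 hNpos
    refine h6.trans (add_le_add_right ?_ _)
    apply intervalIntegral.integral_mono_on ht.2 (hcont2 t ht (2 * C) C) (hcont2 t ht K C)
    intro s _
    have h7 : K * u s = 2 * C * u s + u s := by rw [hKdef]; ring
    have := hunn s
    linarith
  have hUbd : ∀ s ∈ Icc (0:ℝ) T, u s ≤ U := by
    intro s hs
    have := gronwall_int hT.le hKpos hC huc (fun x _ => hunn x) hIA s hs
    rwa [hUdef]
  -- individual bound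
  intro i t ht
  have hint3 : IntervalIntegrable (fun s => K * ‖r i s‖ + (C * U + C)) volume t T := by
    have : ContinuousOn (fun s => K * ‖r i s‖ + (C * U + C)) (uIcc t T) := by
      rw [uIcc_of_le ht.2]
      exact (continuousOn_const.mul ((hrc i).norm.mono (Icc_subset_Icc ht.1 le_rfl))).add
        continuousOn_const
    exact this.intervalIntegrable
  have hIB2 : ∀ t' ∈ Icc (0:ℝ) T,
      ‖r i t'‖ ≤ C_g + ∫ s in t'..T, (K * ‖r i s‖ + (C * U + C)) := by
    intro t' ht'
    refine (hIB i t' ht').trans (add_le_add_right ?_ _)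
    have hint3' : IntervalIntegrable (fun s => K * ‖r i s‖ + (C * U + C)) volume t' T := by
      have : ContinuousOn (fun s => K * ‖r i s‖ + (C * U + C)) (uIcc t' T) := by
        rw [uIcc_of_le ht'.2]
        exact (continuousOn_const.mul ((hrc i).norm.mono (Icc_subset_Icc ht'.1 le_rfl))).add
          continuousOn_const
      exact this.intervalIntegrable
    apply intervalIntegral.integral_mono_on ht'.2 (hbint i t' ht') hint3'
    intro s hs
    have hsIcc : s ∈ Icc (0:ℝ) T := ⟨ht'.1.trans hs.1, hs.2⟩
    have e1 : C * u s ≤ C * U := mul_le_mul_of_nonneg_left (hUbd s hsIcc) hC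
    have e2 : C * ‖r i s‖ ≤ K * ‖r i s‖ :=
      mul_le_mul_of_nonneg_right (by rw [hKdef]; linarith) (norm_nonneg _)
    linarith
  have hfin := gronwall_int hT.le hKpos (by positivity : (0:ℝ) ≤ C * U + C)
    ((hrc i).norm) (fun s _ => norm_nonneg _) hIB2 t ht
  linarith

end
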